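/- For any graph G, the limit as x → ∞ of Σ_{1 ≤ n_1 ≤ x} ⋯ Σ_{1 ≤ n_e ≤ x} |μ(n_1)⋯μ(n_e)| · ∏_{r=1}^{v} 1/N_r is finite; that is, the series Σ over all edge numberings of G of |μ(n_1)⋯μ(n_e)| ∏_{r=1}^{v} 1/N_r converges. -/

import Mathlib

open scoped BigOperators Classical

noncomputable section

/-- The vertex numbering `N_r` associated to an edge numbering `n` of the graph with
vertex set `Fin v` and edge set `E`: the lcm of `n a` over the edges `a` incident to `r`
(equal to `1` if `r` is isolated). -/
def vertexNum (v : ℕ) (E : Finset (Sym2 (Fin v))) (n : {a : Sym2 (Fin v) // a ∈ E} → ℕ+)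
    (r : Fin v) : ℕ :=
  (E.attach.filter fun a => r ∈ a.1).lcm fun a => (n a : ℕ)

/-- The series, over all edge numberings `(n_a)` of the graph, of
`|μ(n_1) ⋯ μ(n_e)| ∏_{r=1}^{v} 1 / N_r` converges. -/
theorem stmt8 (v : ℕ) (E : Finset (Sym2 (Fin v))) (hE : ∀ a ∈ E, ¬ a.IsDiag) :
    Summable fun n : {a : Sym2 (Fin v) // a ∈ E} → ℕ+ =>
      |∏ a, (ArithmeticFunction.moebius (n a : ℕ) : ℝ)| *
        ∏ r, 1 / (vertexNum v E n r : ℝ) := by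
  classical
  -- notation
  set ES := {a : Sym2 (Fin v) // a ∈ E} with hES
  -- positivity of vertexNum
  have hNpos : ∀ (n : ES → ℕ+) (r : Fin v), 0 < vertexNum v E n r := by
    intro n r
    rcases Nat.eq_zero_or_pos (vertexNum v E n r) with h | h
    · exfalso
      rw [vertexNum, Finset.lcm_eq_zero_iff] at h
      obtain ⟨a, -, ha⟩ := h
      exact (n a).ne_zero (by simpa using ha)
    · exact h
  -- each edge number divides the vertex number of an incident vertex
  have hdvdN : ∀ (n : ES → ℕ+) (a : ES) (r : Fin v), r ∈ a.1 →
      (n a : ℕ) ∣ vertexNum v E n r := by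
    intro n a r hr
    apply Finset.dvd_lcm
    simp [hr]
  -- the "covered vertices" count
  set c : Finset ES → ℕ := fun S =>
    (Finset.univ.filter fun r : Fin v => ∃ a ∈ S, r ∈ a.1).card with hc
  have hc_empty : c ∅ = 0 := by simp [hc]
  have hc_two : ∀ S : Finset ES, S.Nonempty → 2 ≤ c S := by
    intro S ⟨a, ha⟩
    obtain ⟨x, y, hxy⟩ : ∃ x y, a.1 = s(x, y) :=
      Sym2.inductionOn (f := fun z => ∃ x y, z = s(x, y)) a.1 fun x y => ⟨x, y, rfl⟩
    have hne : x ≠ y := by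
      intro h; exact hE a.1 a.2 (by rw [hxy, h]; exact Sym2.mk_isDiag_iff.2 rfl)
    have hx : x ∈ Finset.univ.filter fun r : Fin v => ∃ a ∈ S, r ∈ a.1 := by
      simp only [Finset.mem_filter, Finset.mem_univ, true_and]
      exact ⟨a, ha, by rw [hxy]; exact Sym2.mem_mk_left x y⟩
    have hy : y ∈ Finset.univ.filter fun r : Fin v => ∃ a ∈ S, r ∈ a.1 := by
      simp only [Finset.mem_filter, Finset.mem_univ, true_and]
      exact ⟨a, ha, by rw [hxy]; exact Sym2.mem_mk_right x y⟩
    exact Finset.one_lt_card.2 ⟨x, hx, y, hy, hne⟩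
  -- the dominating function
  set g : ℕ → Finset ES → ℝ := fun p S => 1 / (p : ℝ) ^ (c S) with hg
  have hg_nonneg : ∀ p S, 0 ≤ g p S := by intro p S; positivity
  -- the constant
  set C : ℝ := Real.exp ((2 : ℝ) ^ E.card * ∑' m : ℕ, 1 / (m : ℝ) ^ 2) with hC
  apply summable_of_sum_le (c := C)
  · intro n
    positivity
  intro u
  -- Step A : reduce to squarefree tuples
  set SF : (ES → ℕ+) → Prop := fun n => ∀ a : ES, Squarefree ((n a : ℕ)) with hSF
  have stepA : ∑ n ∈ u, (|∏ a, (ArithmeticFunction.moebius (n a : ℕ) : ℝ)| *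
        ∏ r, 1 / (vertexNum v E n r : ℝ))
      ≤ ∑ n ∈ u.filter SF, ∏ r, 1 / (vertexNum v E n r : ℝ) := by
    rw [Finset.sum_filter]
    apply Finset.sum_le_sum
    intro n _
    by_cases h : SF n
    · rw [if_pos h]
      have h1 : |∏ a, (ArithmeticFunction.moebius (n a : ℕ) : ℝ)| ≤ 1 := by
        rw [Finset.abs_prod]
        apply Finset.prod_le_one
        · intro a _; positivity
        · intro a _
          have h2 := ArithmeticFunction.abs_moebius_eq_one_of_squarefree (h a)
          have h3 : |((ArithmeticFunction.moebius (n a : ℕ) : ℤ) : ℝ)| = 1 := by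
            rw [← Int.cast_abs, h2]; norm_num
          exact h3.le
      exact mul_le_of_le_one_left (by positivity) h1
    · rw [if_neg h]
      have h' : ∃ a : ES, ¬ Squarefree ((n a : ℕ)) := by
        by_contra hcon
        push_neg at hcon
        exact h (by rw [hSF]; exact fun a => hcon a)
      obtain ⟨a, ha⟩ := h'
      have : (ArithmeticFunction.moebius ((n a : ℕ)) : ℤ) = 0 :=
        ArithmeticFunction.moebius_eq_zero_of_not_squarefree ha
      rw [Finset.prod_eq_zero (Finset.mem_univ a) (by rw [this]; norm_num)]
      simp
  set u' := u.filter SF with hu'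
  -- the finite set of relevant primes
  set Q : Finset ℕ := u'.biUnion (fun n => Finset.univ.biUnion fun a : ES =>
      ((n a : ℕ)).primeFactors) with hQ
  have hQ_prime : ∀ p ∈ Q, p.Prime := by
    intro p hp
    rw [hQ] at hp
    simp only [Finset.mem_biUnion] at hp
    obtain ⟨n, -, a, -, hpa⟩ := hp
    exact Nat.prime_of_mem_primeFactors hpa
  have hQ_mem : ∀ n ∈ u', ∀ a : ES, ((n a : ℕ)).primeFactors ⊆ Q := by
    intro n hn a p hp
    rw [hQ]
    simp only [Finset.mem_biUnion]
    exact ⟨n, hn, a, Finset.mem_univ a, hp⟩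
  -- the encoding map
  set Φ : (ES → ℕ+) → ({p // p ∈ Q} → Finset ES) := fun n p =>
      Finset.univ.filter fun a => (p : ℕ) ∣ (n a : ℕ) with hΦ
  -- prime factors description
  have hpf : ∀ n ∈ u', ∀ a : ES,
      ((n a : ℕ)).primeFactors = Q.filter (fun p => p ∣ (n a : ℕ)) := by
    intro n hn a
    ext p
    simp only [Finset.mem_filter, Nat.mem_primeFactors]
    constructor
    · intro hp
      exact ⟨hQ_mem n hn a (Nat.mem_primeFactors.2 hp), hp.2.1⟩
    · rintro ⟨hpQ, hpd⟩
      exact ⟨hQ_prime p hpQ, hpd, (n a).ne_zero⟩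
  -- Step D : injectivity on u'
  have hinj : Set.InjOn Φ ↑u' := by
    intro n hn m hm hnm
    simp only [Finset.mem_coe] at hn hm
    have hn' : SF n := (Finset.mem_filter.1 hn).2
    have hm' : SF m := (Finset.mem_filter.1 hm).2
    funext a
    have hdvd : ∀ p ∈ Q, (p ∣ (n a : ℕ) ↔ p ∣ (m a : ℕ)) := by
      intro p hp
      have h1 : a ∈ Φ n ⟨p, hp⟩ ↔ a ∈ Φ m ⟨p, hp⟩ := by rw [hnm]
      simpa [hΦ] using h1
    have heq : ((n a : ℕ)).primeFactors = ((m a : ℕ)).primeFactors := by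
      rw [hpf n hn a, hpf m hm a]
      apply Finset.filter_congr
      intro p hp
      simp [hdvd p hp]
    have h1 : (n a : ℕ) = (m a : ℕ) := by
      rw [← Nat.prod_primeFactors_of_squarefree (hn' a),
        ← Nat.prod_primeFactors_of_squarefree (hm' a), heq]
    exact PNat.coe_injective h1
  -- Step C : pointwise bound
  have stepC : ∀ n ∈ u', ∏ r, 1 / (vertexNum v E n r : ℝ)
      ≤ ∏ p : {p // p ∈ Q}, g p (Φ n p) := by
    intro n hn
    -- natural number inequality
    have key : ∏ p ∈ Q, p ^ (c (Finset.univ.filter fun a => p ∣ (n a : ℕ)))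
        ≤ ∏ r, vertexNum v E n r := by
      have h1 : ∀ p ∈ Q, c (Finset.univ.filter fun a => p ∣ (n a : ℕ))
          ≤ (Finset.univ.filter fun r : Fin v => p ∣ vertexNum v E n r).card := by
        intro p hp
        apply Finset.card_le_card
        intro r hr
        simp only [hc, Finset.mem_filter, Finset.mem_univ, true_and] at hr ⊢
        obtain ⟨a, ha, hra⟩ := hr
        have hdvd' : (p : ℕ) ∣ (n a : ℕ) := by simpa using ha
        exact hdvd'.trans (hdvdN n a r hra)
      calc ∏ p ∈ Q, p ^ (c (Finset.univ.filter fun a => p ∣ (n a : ℕ)))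
          ≤ ∏ p ∈ Q, p ^ (Finset.univ.filter fun r : Fin v =>
              p ∣ vertexNum v E n r).card := by
            apply Finset.prod_le_prod'
            intro p hp
            exact Nat.pow_le_pow_right (hQ_prime p hp).one_lt.le (h1 p hp)
        _ = ∏ p ∈ Q, ∏ _r ∈ (Finset.univ.filter fun r : Fin v =>
              p ∣ vertexNum v E n r), p := by
            refine Finset.prod_congr rfl fun p _ => ?_
            rw [Finset.prod_const]
        _ = ∏ r : Fin v, ∏ p ∈ Q.filter (fun p => p ∣ vertexNum v E n r), p := by
            apply Finset.prod_comm'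
            intro p r
            simp only [Finset.mem_filter, Finset.mem_univ, true_and, and_comm]
        _ ≤ ∏ r : Fin v, vertexNum v E n r := by
            apply Finset.prod_le_prod'
            intro r _
            have hsub : Q.filter (fun p => p ∣ vertexNum v E n r)
                ⊆ (vertexNum v E n r).primeFactors := by
              intro p hp
              simp only [Finset.mem_filter] at hp
              exact Nat.mem_primeFactors.2 ⟨hQ_prime p hp.1, hp.2, (hNpos n r).ne'⟩
            calc ∏ p ∈ Q.filter (fun p => p ∣ vertexNum v E n r), p
                ≤ ∏ p ∈ (vertexNum v E n r).primeFactors, p := by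
                  apply Finset.prod_le_prod_of_subset_of_one_le' hsub
                  intro p hp _
                  exact (Nat.prime_of_mem_primeFactors hp).one_lt.le
              _ ≤ vertexNum v E n r :=
                  Nat.le_of_dvd (hNpos n r) (Nat.prod_primeFactors_dvd _)
    -- convert to ℝ
    have hL : ∏ r, 1 / (vertexNum v E n r : ℝ)
        = ((∏ r, vertexNum v E n r : ℕ) : ℝ)⁻¹ := by
      push_cast
      rw [← Finset.prod_inv_distrib]
      simp [one_div]
    have hR : ∏ p : {p // p ∈ Q}, g p (Φ n p)
        = ((∏ p ∈ Q, p ^ (c (Finset.univ.filter fun a => p ∣ (n a : ℕ)))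
            : ℕ) : ℝ)⁻¹ := by
      rw [Finset.prod_coe_sort Q (fun p => g p (Finset.univ.filter fun a => p ∣ (n a : ℕ)))]
      push_cast
      rw [← Finset.prod_inv_distrib]
      simp [hg, one_div]
    rw [hL, hR]
    apply inv_anti₀
    · exact_mod_cast Finset.prod_pos (fun p hp => pow_pos (hQ_prime p hp).pos _)
    · exact_mod_cast key
  -- Step E+F : sum over the encoding
  have stepEF : ∑ n ∈ u', ∏ p : {p // p ∈ Q}, g p (Φ n p)
      ≤ ∏ p : {p // p ∈ Q}, ∑ S : Finset ES, g p S := by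
    have himg := Finset.sum_image (s := u') (g := Φ)
      (f := fun F : {p // p ∈ Q} → Finset ES => ∏ p : {p // p ∈ Q}, g p (F p))
      (fun n hn m hm h => hinj hn hm h)
    rw [← himg]
    have : ∏ p : {p // p ∈ Q}, ∑ S : Finset ES, g p S
        = ∑ F ∈ Fintype.piFinset (fun _ : {p // p ∈ Q} => (Finset.univ : Finset (Finset ES))),
            ∏ p : {p // p ∈ Q}, g p (F p) := by
      rw [Finset.prod_univ_sum]
    rw [this, Fintype.piFinset_univ]
    apply Finset.sum_le_sum_of_subset_of_nonneg (Finset.subset_univ _)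
    intro F _ _
    exact Finset.prod_nonneg fun p _ => hg_nonneg p _
  -- Step G : local factor bound
  have stepG : ∀ p ∈ Q, ∑ S : Finset ES, g p S
      ≤ Real.exp ((2 : ℝ) ^ E.card * (1 / (p : ℝ) ^ 2)) := by
    intro p hp
    have hp2 : (2 : ℝ) ≤ (p : ℝ) := by exact_mod_cast (hQ_prime p hp).two_le
    have hppos : (0 : ℝ) < p := by linarith
    have h1 : ∑ S : Finset ES, g p S
        ≤ 1 + (2 : ℝ) ^ E.card * (1 / (p : ℝ) ^ 2) := by
      rw [← Finset.sum_erase_add _ _ (Finset.mem_univ (∅ : Finset ES))]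
      have hempty : g p ∅ = 1 := by simp [hg, hc_empty]
      rw [hempty, add_comm]
      gcongr
      calc ∑ S ∈ Finset.univ.erase (∅ : Finset ES), g p S
          ≤ ∑ _S ∈ Finset.univ.erase (∅ : Finset ES), 1 / (p : ℝ) ^ 2 := by
            apply Finset.sum_le_sum
            intro S hS
            have hSne : S.Nonempty :=
              Finset.nonempty_iff_ne_empty.2 (Finset.ne_of_mem_erase hS)
            have h2 : (p : ℝ) ^ 2 ≤ (p : ℝ) ^ (c S) := by
              apply pow_le_pow_right₀ (by linarith) (hc_two S hSne)
            rw [hg]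
            apply one_div_le_one_div_of_le (by positivity) h2
        _ = ((Finset.univ.erase (∅ : Finset ES)).card : ℝ) * (1 / (p : ℝ) ^ 2) := by
            rw [Finset.sum_const, nsmul_eq_mul]
        _ ≤ (2 : ℝ) ^ E.card * (1 / (p : ℝ) ^ 2) := by
            apply mul_le_mul_of_nonneg_right _ (by positivity)
            calc ((Finset.univ.erase (∅ : Finset ES)).card : ℝ)
                ≤ ((Finset.univ : Finset (Finset ES)).card : ℝ) := by
                  exact_mod_cast Finset.card_le_card (Finset.erase_subset _ _)
              _ = (2 : ℝ) ^ E.card := by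
                  rw [Finset.card_univ, Fintype.card_finset, Fintype.card_coe]
                  push_cast
                  ring
    calc ∑ S : Finset ES, g p S ≤ 1 + (2 : ℝ) ^ E.card * (1 / (p : ℝ) ^ 2) := h1
      _ ≤ Real.exp ((2 : ℝ) ^ E.card * (1 / (p : ℝ) ^ 2)) := by
          rw [add_comm]
          exact Real.add_one_le_exp _
  -- assemble
  have summ2 : Summable (fun m : ℕ => 1 / (m : ℝ) ^ 2) := by
    simpa using Real.summable_one_div_nat_pow.2 (by norm_num : 1 < 2)
  calc ∑ n ∈ u, (|∏ a, (ArithmeticFunction.moebius (n a : ℕ) : ℝ)| *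
        ∏ r, 1 / (vertexNum v E n r : ℝ))
      ≤ ∑ n ∈ u', ∏ r, 1 / (vertexNum v E n r : ℝ) := stepA
    _ ≤ ∑ n ∈ u', ∏ p : {p // p ∈ Q}, g p (Φ n p) :=
        Finset.sum_le_sum stepC
    _ ≤ ∏ p : {p // p ∈ Q}, ∑ S : Finset ES, g p S := stepEF
    _ ≤ ∏ p : {p // p ∈ Q}, Real.exp ((2 : ℝ) ^ E.card * (1 / ((p : ℕ) : ℝ) ^ 2)) := by
        apply Finset.prod_le_prod
        · intro p _
          exact Finset.sum_nonneg fun S _ => hg_nonneg _ _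
        · intro p _
          exact stepG p.1 p.2
    _ = Real.exp (∑ p : {p // p ∈ Q}, (2 : ℝ) ^ E.card * (1 / ((p : ℕ) : ℝ) ^ 2)) := by
        rw [Real.exp_sum]
    _ ≤ C := by
        rw [hC]
        apply Real.exp_le_exp.2
        rw [← Finset.mul_sum]
        apply mul_le_mul_of_nonneg_left _ (by positivity)
        rw [Finset.sum_coe_sort Q (fun p => 1 / (p : ℝ) ^ 2)]
        exact Summable.sum_le_tsum Q (fun m _ => by positivity) summ2
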